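/- Let m ≥ 3 and k ≥ 1 be integers, let r ∈ (0,1), let D ⊆ ℝ^k be a measurable set, and let q : D → ℝ be measurable with 0 ≤ q(z) < 1 for all z ∈ D. Then there exists a constant C > 0, depending only on m, such that ∫_D ( ∫_{B_r} ‖y‖^{(m−2)√(1−q(z)) − m} dy ) dz ≤ C ∫_D (1 − q(z))^{−1/2} dz, where B_r = {y ∈ ℝ^m : ‖y‖ < r}. In particular, if ∫_D (1−q(z))^{−1/2} dz < ∞ then the double integral on the left is finite. -/

import Mathlib

open MeasureTheory Metric Set
open scoped ENNReal

lemma ball_rpow_lintegral_bound (m : ℕ) (hm : 1 ≤ m) {p : ℝ} (hp : 0 < (m : ℝ) + p)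
    {r : ℝ} (hr0 : 0 < r) (hr1 : r ≤ 1) :
    ∫⁻ y in ball (0 : EuclideanSpace ℝ (Fin m)) r, ENNReal.ofReal (‖y‖ ^ p) ≤
      (m : ℝ≥0∞) * volume (ball (0 : EuclideanSpace ℝ (Fin m)) 1) *
        ENNReal.ofReal (1 / ((m : ℝ) + p)) := by
  set E := EuclideanSpace ℝ (Fin m)
  haveI : Nonempty (Fin m) := ⟨⟨0, by omega⟩⟩
  haveI : Nontrivial E := by
    unfold E
    infer_instance
  have hdim : Module.finrank ℝ E = m := finrank_euclideanSpace_fin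
  set μ : Measure E := volume with hμ
  set F : ℝ → ℝ≥0∞ := Set.indicator (Iio r) fun t => ENNReal.ofReal (t ^ p) with hF
  have hFmeas : Measurable F :=
    ((measurable_id.pow measurable_const).ennreal_ofReal).indicator measurableSet_Iio
  have step1 : ∫⁻ y in ball (0 : E) r, ENNReal.ofReal (‖y‖ ^ p) = ∫⁻ y, F ‖y‖ ∂μ := by
    rw [← lintegral_indicator measurableSet_ball]
    refine lintegral_congr fun y => ?_
    by_cases h : ‖y‖ < r
    · simp [hF, Set.indicator_of_mem, mem_ball_zero_iff.mpr h, h]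
    · simp [hF, Set.indicator_of_notMem, h, fun hy => h (mem_ball_zero_iff.mp hy)]
  have hG : Measurable fun w : sphere (0 : E) 1 × Ioi (0 : ℝ) => F (w.2 : ℝ) :=
    hFmeas.comp (measurable_subtype_coe.comp measurable_snd)
  have hmp := (volume : Measure E).measurePreserving_homeomorphUnitSphereProd
  have step2 : ∫⁻ y, F ‖y‖ ∂μ
      = ∫⁻ w : sphere (0 : E) 1 × Ioi (0 : ℝ), F (w.2 : ℝ)
          ∂((μ.toSphere).prod (.volumeIoiPow (Module.finrank ℝ E - 1))) := by
    rw [← hmp.map_eq, lintegral_map hG (Homeomorph.measurable _)]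
    simp only [homeomorphUnitSphereProd_apply_snd_coe]
    rw [lintegral_subtype_comap (measurableSet_singleton (0:E)).compl (fun x => F ‖x‖),
      restrict_compl_singleton]
  have step3 : ∫⁻ w : sphere (0 : E) 1 × Ioi (0 : ℝ), F (w.2 : ℝ)
        ∂((μ.toSphere).prod (.volumeIoiPow (Module.finrank ℝ E - 1)))
      = μ.toSphere univ * ∫⁻ t, F (t : ℝ) ∂(Measure.volumeIoiPow (Module.finrank ℝ E - 1)) := by
    rw [lintegral_prod _ hG.aemeasurable]
    simp [lintegral_const, mul_comm]
  have hcast : ((m - 1 : ℕ) : ℝ) = (m : ℝ) - 1 := by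
    rw [Nat.cast_sub hm]; norm_num
  have step4 : (∫⁻ t, F (t : ℝ) ∂(Measure.volumeIoiPow (Module.finrank ℝ E - 1)))
      = ∫⁻ t in Ioo (0 : ℝ) r, ENNReal.ofReal (t ^ ((m : ℝ) - 1 + p)) := by
    rw [hdim, Measure.volumeIoiPow,
      lintegral_withDensity_eq_lintegral_mul _
        ((measurable_subtype_coe.pow_const _).ennreal_ofReal)
        (show Measurable fun t : Ioi (0:ℝ) => F (t : ℝ) from hFmeas.comp measurable_subtype_coe)]
    have h1 : ∫⁻ t : Ioi (0 : ℝ),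
          ENNReal.ofReal ((t : ℝ) ^ (m - 1)) * F (t : ℝ) ∂(Measure.comap Subtype.val volume)
        = ∫⁻ t in Ioi (0 : ℝ), ENNReal.ofReal (t ^ (m - 1)) * F t :=
      lintegral_subtype_comap measurableSet_Ioi (fun t => ENNReal.ofReal (t ^ (m - 1)) * F t)
    rw [show ((fun t : Ioi (0:ℝ) => ENNReal.ofReal ((t : ℝ) ^ (m - 1))) *
        fun t : Ioi (0:ℝ) => F (t : ℝ))
        = fun t : Ioi (0:ℝ) => ENNReal.ofReal ((t : ℝ) ^ (m - 1)) * F (t : ℝ) from rfl, h1]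
    have h2 : ∀ t : ℝ, ENNReal.ofReal (t ^ (m - 1)) * F t
        = (Iio r).indicator (fun t => ENNReal.ofReal (t ^ (m - 1)) * ENNReal.ofReal (t ^ p)) t := by
      intro t
      by_cases h : t ∈ Iio r <;>
        simp [hF, Set.indicator_of_mem, Set.indicator_of_notMem, h]
    simp only [h2]
    rw [lintegral_indicator measurableSet_Iio, Measure.restrict_restrict measurableSet_Iio]
    have h3 : Iio r ∩ Ioi (0 : ℝ) = Ioo (0 : ℝ) r := by
      ext t; simp [mem_Ioo, mem_Iio, mem_Ioi, and_comm]
    rw [h3]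
    refine setLIntegral_congr_fun measurableSet_Ioo (fun t ht => ?_)
    rw [← ENNReal.ofReal_mul (pow_nonneg ht.1.le _), ← Real.rpow_natCast t (m - 1), hcast,
      ← Real.rpow_add ht.1]
  have ha : (-1 : ℝ) < (m : ℝ) - 1 + p := by linarith
  have step5 : (∫⁻ t in Ioo (0 : ℝ) r, ENNReal.ofReal (t ^ ((m : ℝ) - 1 + p)))
      = ENNReal.ofReal (r ^ ((m : ℝ) + p) / ((m : ℝ) + p)) := by
    rw [Measure.restrict_congr_set Ioo_ae_eq_Ioc,
      ← ofReal_integral_eq_lintegral_ofReal (intervalIntegral.intervalIntegrable_rpow' ha).1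
        (by
          filter_upwards [ae_restrict_mem measurableSet_Ioc] with t ht
          exact Real.rpow_nonneg ht.1.le _)]
    congr 1
    rw [← intervalIntegral.integral_of_le hr0.le, integral_rpow (Or.inl ha),
      Real.zero_rpow (by linarith)]
    ring_nf
  have hsph : μ.toSphere univ = (m : ℝ≥0∞) * volume (ball (0 : E) 1) := by
    rw [Measure.toSphere_apply_univ, hdim]
  rw [step1, step2, step3, step4, step5, hsph]
  refine mul_le_mul_right (ENNReal.ofReal_le_ofReal ?_) _
  gcongr
  exact Real.rpow_le_one hr0.le hr1 hp.le


/-- Upper bound (flat model of Lemma 2.3): there is a constant `C > 0`,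
depending only on `m`, such that for every `r ∈ (0,1)`, every measurable
`D ⊆ ℝ^k` and every measurable `q : D → [0,1)`,
`∫_D ∫_{B_r} ‖y‖^{(m-2)√(1-q(z)) - m} dy dz ≤ C ∫_D (1-q(z))^{-1/2} dz`.
In particular, if `∫_D (1-q(z))^{-1/2} dz < ∞` then the double integral is
finite. -/
theorem supersolution_weighted_norm_upper_bound (m k : ℕ) (hm : 3 ≤ m) (hk : 1 ≤ k) :
    ∃ C : ℝ, 0 < C ∧
      ∀ r : ℝ, 0 < r → r < 1 →
      ∀ D : Set (EuclideanSpace ℝ (Fin k)), MeasurableSet D →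
      ∀ q : EuclideanSpace ℝ (Fin k) → ℝ, Measurable q →
        (∀ z ∈ D, 0 ≤ q z ∧ q z < 1) →
        (∫⁻ z in D, ∫⁻ y in Metric.ball (0 : EuclideanSpace ℝ (Fin m)) r,
            ENNReal.ofReal (‖y‖ ^ (((m : ℝ) - 2) * Real.sqrt (1 - q z) - m))) ≤
          ENNReal.ofReal C * (∫⁻ z in D, ENNReal.ofReal ((1 - q z) ^ (-(1 / 2) : ℝ))) ∧
        ((∫⁻ z in D, ENNReal.ofReal ((1 - q z) ^ (-(1 / 2) : ℝ))) < ⊤ →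
          (∫⁻ z in D, ∫⁻ y in Metric.ball (0 : EuclideanSpace ℝ (Fin m)) r,
            ENNReal.ofReal (‖y‖ ^ (((m : ℝ) - 2) * Real.sqrt (1 - q z) - m))) < ⊤) := by
  have hm2 : (0 : ℝ) < (m : ℝ) - 2 := by
    have : (3 : ℝ) ≤ (m : ℝ) := by exact_mod_cast hm
    linarith
  set E := EuclideanSpace ℝ (Fin m)
  set V := volume (Metric.ball (0 : E) 1) with hV
  have hVlt : V < ⊤ := measure_ball_lt_top
  have hVpos : (0 : ℝ) < V.toReal :=
    ENNReal.toReal_pos (measure_ball_pos _ _ one_pos).ne' hVlt.ne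
  have hCpos : 0 < ((m : ℝ) * V.toReal) / ((m : ℝ) - 2) := by
    apply div_pos _ hm2
    have hmpos : (0:ℝ) < (m:ℝ) := by linarith
    exact mul_pos hmpos hVpos
  refine ⟨((m : ℝ) * V.toReal) / ((m : ℝ) - 2), hCpos, ?_⟩
  intro r hr0 hr1 D hD q hq hqD
  set C : ℝ := ((m : ℝ) * V.toReal) / ((m : ℝ) - 2) with hC
  have key : ∀ z ∈ D,
      (∫⁻ y in Metric.ball (0 : E) r,
          ENNReal.ofReal (‖y‖ ^ (((m : ℝ) - 2) * Real.sqrt (1 - q z) - m)))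
        ≤ ENNReal.ofReal C * ENNReal.ofReal ((1 - q z) ^ (-(1 / 2) : ℝ)) := by
    intro z hz
    obtain ⟨hq0, hq1⟩ := hqD z hz
    have h1q : 0 < 1 - q z := by linarith
    set s := Real.sqrt (1 - q z) with hs
    have hs0 : 0 < s := Real.sqrt_pos.mpr h1q
    have hsum : (m : ℝ) + (((m : ℝ) - 2) * s - m) = ((m : ℝ) - 2) * s := by ring
    have hppos : 0 < (m : ℝ) + (((m : ℝ) - 2) * s - m) := by
      rw [hsum]; exact mul_pos hm2 hs0
    refine (ball_rpow_lintegral_bound m (by omega) hppos hr0 hr1.le).trans ?_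
    have hmV : (m : ℝ≥0∞) * V = ENNReal.ofReal ((m : ℝ) * V.toReal) := by
      rw [ENNReal.ofReal_mul (by positivity), ENNReal.ofReal_natCast,
        ENNReal.ofReal_toReal hVlt.ne]
    rw [hmV, ← ENNReal.ofReal_mul (by positivity), ← ENNReal.ofReal_mul hCpos.le]
    apply ENNReal.ofReal_le_ofReal
    have hinv : (1 - q z) ^ (-(1 / 2) : ℝ) = s⁻¹ := by
      rw [Real.rpow_neg h1q.le, hs, Real.sqrt_eq_rpow]
    rw [hinv, hsum, hC]
    apply le_of_eq
    field_simp
  have main : (∫⁻ z in D, ∫⁻ y in Metric.ball (0 : E) r,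
        ENNReal.ofReal (‖y‖ ^ (((m : ℝ) - 2) * Real.sqrt (1 - q z) - m)))
      ≤ ENNReal.ofReal C * (∫⁻ z in D, ENNReal.ofReal ((1 - q z) ^ (-(1 / 2) : ℝ))) := by
    calc (∫⁻ z in D, ∫⁻ y in Metric.ball (0 : E) r,
          ENNReal.ofReal (‖y‖ ^ (((m : ℝ) - 2) * Real.sqrt (1 - q z) - m)))
        ≤ ∫⁻ z in D, ENNReal.ofReal C * ENNReal.ofReal ((1 - q z) ^ (-(1 / 2) : ℝ)) :=
          lintegral_mono_ae ((ae_restrict_iff' hD).2 (ae_of_all _ key))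
      _ = ENNReal.ofReal C * (∫⁻ z in D, ENNReal.ofReal ((1 - q z) ^ (-(1 / 2) : ℝ))) :=
          lintegral_const_mul' _ _ ENNReal.ofReal_ne_top
  exact ⟨main, fun hfin => main.trans_lt (ENNReal.mul_lt_top ENNReal.ofReal_lt_top hfin)⟩
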